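/- Let G be a connected undirected graph on n ≥ 1 vertices with adjacency matrix A, let β, δ ∈ (0,1), and suppose βλmax(A)/δ > 1. Let Ξ = (Ξ_1,…,Ξ_n) : [0,1]^n → [0,1]^n be twice continuously differentiable and satisfy: (a) Ξ_i(0) = 0 and ∂Ξ_i/∂x_j(0) = βA_{ij} for all i, j; (b) at every point of [0,1]^n, ∂Ξ_i/∂x_j > 0 whenever i ∈ N_j and ∂Ξ_i/∂x_j = 0 whenever i ∉ N_j; (c) ∂²Ξ_i/(∂x_j∂x_k) ≤ 0 on [0,1]^n for all i, j, k. Let ω : [0,1] → [0,∞) be differentiable and satisfy: (d) ω(0) = 0 and ω(1) ≥ 1; (e) ω′(0) = δ and ω′(s) > 0 for all s ∈ (0,1); (f) ω(s₁)/s₁ < ω(s₂)/s₂ whenever 0 < s₁ < s₂ ≤ 1. Define Ψ : [0,1]^n → ℝ^n by Ψ_i(x) = Ξ_i(x) − ω(x_i). Then Ψ has exactly one zero in [0,1]^n other than the origin. -/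

import Mathlib

open Matrix Finset

/-- The largest eigenvalue of a (symmetric) real matrix, as the supremum of its real spectrum. -/
noncomputable def lamMax {n : ℕ} (M : Matrix (Fin n) (Fin n) ℝ) : ℝ :=
  sSup (spectrum ℝ M)

lemma exists_eigvec {n : ℕ} (hn : 1 ≤ n) (A : Matrix (Fin n) (Fin n) ℝ) (hA : A.IsHermitian) :
    ∃ w : Fin n → ℝ, w ≠ 0 ∧ A.mulVec w = lamMax A • w := by
  haveI : Nonempty (Fin n) := Fin.pos_iff_nonempty.mp hn
  have hspec := hA.spectrum_real_eq_range_eigenvalues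
  have hmem : lamMax A ∈ Set.range hA.eigenvalues := by
    rw [lamMax, hspec]
    exact (Set.range_nonempty _).csSup_mem (Set.finite_range _)
  obtain ⟨j, hj⟩ := hmem
  refine ⟨hA.eigenvectorBasis j, ?_, ?_⟩
  · have := hA.eigenvectorBasis.orthonormal.ne_zero j
    intro h; apply this; ext i; exact congrFun h i
  · rw [← hj]; exact hA.mulVec_eigenvectorBasis j

lemma pi_single_sum {n : ℕ} (u : Fin n → ℝ) :
    u = ∑ j, u j • (Pi.single j 1 : Fin n → ℝ) := by
  ext k
  simp [Pi.single_apply, Finset.sum_apply]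

lemma lin_expand {n : ℕ} {M : Type*} [AddCommGroup M] [Module ℝ M] [TopologicalSpace M]
    (L : (Fin n → ℝ) →L[ℝ] M) (a : Fin n → ℝ) :
    L a = ∑ j, a j • L (Pi.single j 1) := by
  conv_lhs => rw [pi_single_sum a]
  rw [map_sum]
  simp

lemma contDiff_coord {n : ℕ} (Ξ : (Fin n → ℝ) → Fin n → ℝ) (hC2 : ContDiff ℝ 2 Ξ) (i : Fin n) :
    ContDiff ℝ 2 (fun y => Ξ y i) :=
  (ContinuousLinearMap.proj i : (Fin n → ℝ) →L[ℝ] ℝ).contDiff.comp hC2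

lemma segderiv {n : ℕ} (Ξ : (Fin n → ℝ) → Fin n → ℝ) (hC2 : ContDiff ℝ 2 Ξ)
    (x d : Fin n → ℝ) (i : Fin n) (t : ℝ) :
    HasDerivAt (fun s : ℝ => Ξ (x + s • d) i) (fderiv ℝ (fun y => Ξ y i) (x + t • d) d) t := by
  have hd : Differentiable ℝ (fun y => Ξ y i) :=
    (contDiff_coord Ξ hC2 i).differentiable (by norm_num)
  have h1 : HasFDerivAt (fun y => Ξ y i) (fderiv ℝ (fun y => Ξ y i) (x + t • d)) (x + t • d) :=
    (hd _).hasFDerivAt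
  have h2 : HasDerivAt (fun s : ℝ => x + s • d) d t := by
    simpa using ((hasDerivAt_id t).smul_const d).const_add x
  simpa [Function.comp_def] using h1.comp_hasDerivAt t h2

lemma fderiv_C1 {n : ℕ} (Ξ : (Fin n → ℝ) → Fin n → ℝ) (hC2 : ContDiff ℝ 2 Ξ) (i : Fin n) :
    Differentiable ℝ (fderiv ℝ (fun y => Ξ y i)) :=
  ((contDiff_coord Ξ hC2 i).fderiv_right (m := 1) (by norm_num)).differentiable one_ne_zero

lemma secondderiv {n : ℕ} (Ξ : (Fin n → ℝ) → Fin n → ℝ) (hC2 : ContDiff ℝ 2 Ξ)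
    (y : Fin n → ℝ) (i : Fin n) (t : ℝ) :
    HasDerivAt (fun s : ℝ => fderiv ℝ (fun z => Ξ z i) (s • y) y)
      ((fderiv ℝ (fderiv ℝ (fun z => Ξ z i)) (t • y) y) y) t := by
  have h1 : HasDerivAt (fun s : ℝ => s • y) y t := by
    simpa using (hasDerivAt_id t).smul_const y
  have h2 := ((fderiv_C1 Ξ hC2 i) (t • y)).hasFDerivAt.comp_hasDerivAt t h1
  have h3 := h2.clm_apply (hasDerivAt_const t y)
  simpa [Function.comp] using h3

lemma fderiv_eval {n : ℕ} (Ξ : (Fin n → ℝ) → Fin n → ℝ) (hC2 : ContDiff ℝ 2 Ξ)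
    (i : Fin n) (p : Fin n → ℝ) (k : Fin n) :
    fderiv ℝ (fun y => fderiv ℝ (fun z => Ξ z i) y (Pi.single k 1)) p
      = (ContinuousLinearMap.apply ℝ ℝ (Pi.single k 1)).comp
          (fderiv ℝ (fderiv ℝ (fun z => Ξ z i)) p) := by
  have h := ((ContinuousLinearMap.apply ℝ ℝ (Pi.single k (1:ℝ))).hasFDerivAt.comp p
    ((fderiv_C1 Ξ hC2 i) p).hasFDerivAt).fderiv
  exact h

lemma segMVT {n : ℕ} (Ξ : (Fin n → ℝ) → Fin n → ℝ) (hC2 : ContDiff ℝ 2 Ξ)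
    (x y : Fin n → ℝ) (i : Fin n) :
    ∃ c ∈ Set.Ioo (0:ℝ) 1,
      Ξ y i - Ξ x i = fderiv ℝ (fun z => Ξ z i) (x + c • (y - x)) (y - x) := by
  have hcont : ContinuousOn (fun s : ℝ => Ξ (x + s • (y - x)) i) (Set.Icc 0 1) :=
    fun t _ => ((segderiv Ξ hC2 x (y - x) i t).continuousAt).continuousWithinAt
  obtain ⟨c, hc, hceq⟩ := exists_hasDerivAt_eq_slope (fun s => Ξ (x + s • (y - x)) i)
    (fun t => fderiv ℝ (fun z => Ξ z i) (x + t • (y - x)) (y - x)) one_pos hcont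
    (fun t _ => segderiv Ξ hC2 x (y - x) i t)
  refine ⟨c, hc, ?_⟩
  rw [hceq]
  have e1 : x + (1:ℝ) • (y - x) = y := by ext k; simp
  have e0 : x + (0:ℝ) • (y - x) = x := by simp
  rw [e1, e0]
  norm_num

lemma ray_concave {n : ℕ} (Ξ : (Fin n → ℝ) → Fin n → ℝ) (hC2 : ContDiff ℝ 2 Ξ)
    (ha0 : Ξ 0 = 0) (i : Fin n)
    (hc2 : ∀ p ∈ Set.Icc (0 : Fin n → ℝ) 1, ∀ j k,
      (fderiv ℝ (fderiv ℝ (fun z => Ξ z i)) p) (Pi.single j 1) (Pi.single k 1) ≤ 0)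
    (y : Fin n → ℝ) (hy : y ∈ Set.Icc (0 : Fin n → ℝ) 1)
    (κ : ℝ) (hκ0 : 0 ≤ κ) (hκ1 : κ ≤ 1) :
    κ * Ξ y i ≤ Ξ (κ • y) i := by
  have hy' : ∀ j, 0 ≤ y j ∧ y j ≤ 1 := by
    intro j; exact ⟨hy.1 j, hy.2 j⟩
  have hmemty : ∀ t : ℝ, 0 ≤ t → t ≤ 1 → t • y ∈ Set.Icc (0 : Fin n → ℝ) 1 := by
    intro t ht0 ht1
    constructor
    · intro j
      have := (hy' j).1
      simpa using mul_nonneg ht0 this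
    · intro j
      have h1 := (hy' j).1
      have h2 := (hy' j).2
      simp only [Pi.smul_apply, smul_eq_mul, Pi.one_apply]
      nlinarith
  have hg' : ∀ t : ℝ, HasDerivAt (fun s : ℝ => Ξ (s • y) i)
      (fderiv ℝ (fun z => Ξ z i) (t • y) y) t := by
    intro t
    have := segderiv Ξ hC2 0 y i t
    simpa using this
  have hcont : ContinuousOn (fun s : ℝ => Ξ (s • y) i) (Set.Icc 0 1) :=
    fun t _ => ((hg' t).continuousAt).continuousWithinAt
  have hf'' : ∀ t ∈ interior (Set.Icc (0:ℝ) 1),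
      (fderiv ℝ (fderiv ℝ (fun z => Ξ z i)) (t • y) y) y ≤ 0 := by
    intro t ht
    rw [interior_Icc] at ht
    have hmem := hmemty t ht.1.le ht.2.le
    rw [lin_expand (fderiv ℝ (fderiv ℝ (fun z => Ξ z i)) (t • y)) y]
    rw [ContinuousLinearMap.coe_sum', Finset.sum_apply]
    apply Finset.sum_nonpos
    intro j _
    rw [ContinuousLinearMap.coe_smul', Pi.smul_apply, smul_eq_mul]
    have hterm : (fderiv ℝ (fderiv ℝ (fun z => Ξ z i)) (t • y)) (Pi.single j 1) y ≤ 0 := by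
      rw [lin_expand ((fderiv ℝ (fderiv ℝ (fun z => Ξ z i)) (t • y)) (Pi.single j 1)) y]
      apply Finset.sum_nonpos
      intro k _
      rw [smul_eq_mul]
      have := hc2 (t • y) hmem j k
      nlinarith [(hy' k).1]
    nlinarith [(hy' j).1]
  have hgc : ConcaveOn ℝ (Set.Icc (0:ℝ) 1) (fun s : ℝ => Ξ (s • y) i) := by
    refine concaveOn_of_hasDerivWithinAt2_nonpos (convex_Icc 0 1) hcont
      (f' := fun t => fderiv ℝ (fun z => Ξ z i) (t • y) y)
      (f'' := fun t => (fderiv ℝ (fderiv ℝ (fun z => Ξ z i)) (t • y) y) y)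
      (fun t _ => (hg' t).hasDerivWithinAt) ?_ hf''
    intro t ht
    exact (secondderiv Ξ hC2 y i t).hasDerivWithinAt
  have h := hgc.2 (Set.left_mem_Icc.mpr zero_le_one) (Set.right_mem_Icc.mpr zero_le_one)
    (sub_nonneg.mpr hκ1) hκ0 (by ring)
  have e0 : ((1 - κ) • (0:ℝ) + κ • (1:ℝ)) = κ := by simp
  rw [e0] at h
  have ez : Ξ ((0:ℝ) • y) i = 0 := by
    rw [zero_smul]
    exact congrFun ha0 i
  have eo : Ξ ((1:ℝ) • y) i = Ξ y i := by rw [one_smul]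
  simp only [smul_eq_mul] at h
  rw [ez, eo] at h
  linarith


set_option maxHeartbeats 2000000 in
/-- Under conditions (a)–(c) on `Ξ` and (d)–(f) on `ω`, if
`β λmax(A) / δ > 1` then `Ψ(x) = Ξ(x) − ω(x_i)` has exactly one zero in `[0,1]^n` other
than the origin. -/
theorem stmt2 {n : ℕ} (hn : 1 ≤ n) (G : SimpleGraph (Fin n)) [DecidableRel G.Adj]
    (hG : G.Connected) (β δ : ℝ) (hβ : β ∈ Set.Ioo (0 : ℝ) 1) (hδ : δ ∈ Set.Ioo (0 : ℝ) 1)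
    (hthr : 1 < β * lamMax (G.adjMatrix ℝ) / δ)
    (Ξ : (Fin n → ℝ) → Fin n → ℝ)
    (hmap : ∀ x ∈ Set.Icc (0 : Fin n → ℝ) 1, Ξ x ∈ Set.Icc (0 : Fin n → ℝ) 1)
    (hC2 : ContDiff ℝ 2 Ξ)
    -- (a)
    (ha0 : Ξ 0 = 0)
    (ha1 : ∀ i j, fderiv ℝ (fun y => Ξ y i) 0 (Pi.single j 1) = β * G.adjMatrix ℝ i j)
    -- (b)
    (hb_pos : ∀ x ∈ Set.Icc (0 : Fin n → ℝ) 1, ∀ i j, G.Adj j i →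
      0 < fderiv ℝ (fun y => Ξ y i) x (Pi.single j 1))
    (hb_zero : ∀ x ∈ Set.Icc (0 : Fin n → ℝ) 1, ∀ i j, ¬ G.Adj j i →
      fderiv ℝ (fun y => Ξ y i) x (Pi.single j 1) = 0)
    -- (c)
    (hc : ∀ x ∈ Set.Icc (0 : Fin n → ℝ) 1, ∀ i j k,
      fderiv ℝ (fun y => fderiv ℝ (fun z => Ξ z i) y (Pi.single k 1)) x (Pi.single j 1) ≤ 0)
    (ω : ℝ → ℝ)
    (hωnn : ∀ s ∈ Set.Icc (0 : ℝ) 1, 0 ≤ ω s)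
    (hωdiff : ∀ s ∈ Set.Icc (0 : ℝ) 1, DifferentiableAt ℝ ω s)
    -- (d)
    (hd0 : ω 0 = 0) (hd1 : 1 ≤ ω 1)
    -- (e)
    (he0 : deriv ω 0 = δ) (he : ∀ s ∈ Set.Ioo (0 : ℝ) 1, 0 < deriv ω s)
    -- (f)
    (hf : ∀ s₁ s₂ : ℝ, 0 < s₁ → s₁ < s₂ → s₂ ≤ 1 → ω s₁ / s₁ < ω s₂ / s₂) :
    ∃! x : Fin n → ℝ, x ∈ Set.Icc (0 : Fin n → ℝ) 1 ∧ x ≠ 0 ∧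
      ∀ i, Ξ x i - ω (x i) = 0 := by
    classical
  haveI : Nonempty (Fin n) := Fin.pos_iff_nonempty.mp hn
  obtain ⟨hβ0, hβ1⟩ := hβ
  obtain ⟨hδ0, hδ1⟩ := hδ
  set lam := lamMax (G.adjMatrix ℝ) with hlam_def
  have hdlam : δ < β * lam := by
    rw [lt_div_iff₀ hδ0] at hthr; linarith
  have hlam_pos : 0 < lam := by nlinarith
  -- cube membership
  have hcube : ∀ x : Fin n → ℝ,
      x ∈ Set.Icc (0 : Fin n → ℝ) 1 ↔ ((∀ i, 0 ≤ x i) ∧ (∀ i, x i ≤ 1)) := by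
    intro x
    rw [Set.mem_Icc]
    constructor
    · exact fun h => ⟨fun i => h.1 i, fun i => h.2 i⟩
    · exact fun h => ⟨fun i => h.1 i, fun i => h.2 i⟩
  -- nonneg derivative entries
  have hder_nonneg : ∀ x ∈ Set.Icc (0 : Fin n → ℝ) 1, ∀ i j,
      0 ≤ fderiv ℝ (fun y => Ξ y i) x (Pi.single j 1) := by
    intro x hx i j
    by_cases h : G.Adj j i
    · exact (hb_pos x hx i j h).le
    · rw [hb_zero x hx i j h]
  -- segment membership
  have hsegmem : ∀ x y : Fin n → ℝ, x ∈ Set.Icc (0 : Fin n → ℝ) 1 →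
      y ∈ Set.Icc (0 : Fin n → ℝ) 1 → x ≤ y → ∀ c : ℝ, 0 ≤ c → c ≤ 1 →
      x + c • (y - x) ∈ Set.Icc (0 : Fin n → ℝ) 1 := by
    intro x y hx hy hxy c hc0 hc1
    rw [hcube]
    constructor
    · intro i
      have h1 : 0 ≤ x i := hx.1 i
      have h2 : x i ≤ y i := hxy i
      have : (x + c • (y - x)) i = x i + c * (y i - x i) := by
        simp [Pi.add_apply, Pi.smul_apply, Pi.sub_apply]
      rw [this]; nlinarith
    · intro i
      have h2 : x i ≤ y i := hxy i
      have h3 : y i ≤ 1 := hy.2 i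
      have h1 : 0 ≤ x i := hx.1 i
      have : (x + c • (y - x)) i = x i + c * (y i - x i) := by
        simp [Pi.add_apply, Pi.smul_apply, Pi.sub_apply]
      rw [this]; nlinarith
  -- monotonicity
  have hmono : ∀ x y : Fin n → ℝ, x ∈ Set.Icc (0 : Fin n → ℝ) 1 →
      y ∈ Set.Icc (0 : Fin n → ℝ) 1 → x ≤ y → ∀ i, Ξ x i ≤ Ξ y i := by
    intro x y hx hy hxy i
    obtain ⟨c, hc, heq⟩ := segMVT Ξ hC2 x y i
    have hmem := hsegmem x y hx hy hxy c hc.1.le hc.2.le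
    have h0 : 0 ≤ fderiv ℝ (fun z => Ξ z i) (x + c • (y - x)) (y - x) := by
      rw [lin_expand]
      apply Finset.sum_nonneg
      intro j _
      rw [smul_eq_mul]
      have h1 : 0 ≤ (y - x) j := by
        have := hxy j; simp [Pi.sub_apply]; linarith
      exact mul_nonneg h1 (hder_nonneg _ hmem i j)
    linarith
  -- strict positivity across an edge
  have hedge : ∀ x ∈ Set.Icc (0 : Fin n → ℝ) 1, ∀ i m, G.Adj m i → 0 < x m → 0 < Ξ x i := by
    intro x hx i m hadj hm
    have h0c : (0 : Fin n → ℝ) ∈ Set.Icc (0 : Fin n → ℝ) 1 := by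
      rw [hcube]; exact ⟨fun i => le_refl 0, fun i => zero_le_one⟩
    have hxle : (0 : Fin n → ℝ) ≤ x := fun j => hx.1 j
    obtain ⟨c, hc, heq⟩ := segMVT Ξ hC2 0 x i
    have hmem := hsegmem 0 x h0c hx hxle c hc.1.le hc.2.le
    have hz : Ξ (0 : Fin n → ℝ) i = 0 := congrFun ha0 i
    rw [hz, sub_zero] at heq
    rw [heq]
    rw [lin_expand]
    have hterm : 0 < (x - 0) m • (fderiv ℝ (fun z => Ξ z i) ((0:Fin n → ℝ) + c • (x - 0))
        (Pi.single m 1)) := by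
      rw [smul_eq_mul]
      apply mul_pos
      · simp [Pi.sub_apply]; exact hm
      · exact hb_pos _ hmem i m hadj
    refine lt_of_lt_of_le hterm (Finset.single_le_sum
      (f := fun j => (x - 0) j • (fderiv ℝ (fun z => Ξ z i) ((0:Fin n → ℝ) + c • (x - 0))
        (Pi.single j 1))) (fun j _ => ?_) (mem_univ m))
    beta_reduce
    rw [smul_eq_mul]
    have h1 : 0 ≤ (x - 0) j := by simp [Pi.sub_apply]; exact hx.1 j
    exact mul_nonneg h1 (hder_nonneg _ hmem i j)
  -- second-order data
  have hc2 : ∀ i, ∀ p ∈ Set.Icc (0 : Fin n → ℝ) 1, ∀ j k,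
      (fderiv ℝ (fderiv ℝ (fun z => Ξ z i)) p) (Pi.single j 1) (Pi.single k 1) ≤ 0 := by
    intro i p hp j k
    have h := hc p hp i j k
    rw [fderiv_eval Ξ hC2 i p k] at h
    simpa using h
  have hconc := fun (i : Fin n) => ray_concave Ξ hC2 ha0 i (fun p hp => hc2 i p hp)
  -- ω facts
  have hωcont : ContinuousOn ω (Set.Icc 0 1) :=
    fun s hs => (hωdiff s hs).continuousAt.continuousWithinAt
  have hωmono : StrictMonoOn ω (Set.Icc (0:ℝ) 1) := by
    apply strictMonoOn_of_deriv_pos (convex_Icc 0 1) hωcont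
    rw [interior_Icc]; exact he
  have hωle : ∀ a ∈ Set.Icc (0:ℝ) 1, ∀ b ∈ Set.Icc (0:ℝ) 1, ω a ≤ ω b → a ≤ b := by
    intro a ha b hb h
    by_contra hab
    exact absurd (hωmono hb ha (lt_of_not_ge hab)) (not_lt.mpr h)
  have hωlt : ∀ a ∈ Set.Icc (0:ℝ) 1, ∀ b ∈ Set.Icc (0:ℝ) 1, ω a < ω b → a < b := by
    intro a ha b hb h
    by_contra hab
    rcases eq_or_lt_of_le (not_lt.mp hab) with h1 | h1
    · rw [h1] at h; exact lt_irrefl _ h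
    · exact absurd (hωmono hb ha h1) (not_lt.mpr h.le)
  have hsolve : ∀ c ∈ Set.Icc (0:ℝ) 1, ∃ s ∈ Set.Icc (0:ℝ) 1, ω s = c := by
    intro c hc
    have hIVT := intermediate_value_Icc (zero_le_one : (0:ℝ) ≤ 1) hωcont
    have : c ∈ Set.Icc (ω 0) (ω 1) := by
      rw [hd0]; exact ⟨hc.1, le_trans hc.2 hd1⟩
    obtain ⟨s, hs1, hs2⟩ := hIVT this
    exact ⟨s, hs1, hs2⟩
  -- the map T
  obtain ⟨T, hT⟩ : ∃ T : (Fin n → ℝ) → Fin n → ℝ, ∀ x ∈ Set.Icc (0 : Fin n → ℝ) 1, ∀ i,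
      T x i ∈ Set.Icc (0:ℝ) 1 ∧ ω (T x i) = Ξ x i := by
    choose g h1 h2 using hsolve
    refine ⟨fun x i => if h : Ξ x i ∈ Set.Icc (0:ℝ) 1 then g _ h else 0, ?_⟩
    intro x hx i
    have hXi : Ξ x i ∈ Set.Icc (0:ℝ) 1 := by
      have := hmap x hx
      exact ⟨this.1 i, this.2 i⟩
    beta_reduce
    rw [dif_pos hXi]
    exact ⟨h1 _ hXi, h2 _ hXi⟩
  have hTmem : ∀ x ∈ Set.Icc (0 : Fin n → ℝ) 1, T x ∈ Set.Icc (0 : Fin n → ℝ) 1 := by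
    intro x hx
    rw [hcube]
    exact ⟨fun i => (hT x hx i).1.1, fun i => (hT x hx i).1.2⟩
  have hTmono : ∀ x ∈ Set.Icc (0 : Fin n → ℝ) 1, ∀ y ∈ Set.Icc (0 : Fin n → ℝ) 1,
      x ≤ y → T x ≤ T y := by
    intro x hx y hy hxy i
    apply hωle _ (hT x hx i).1 _ (hT y hy i).1
    rw [(hT x hx i).2, (hT y hy i).2]
    exact hmono x y hx hy hxy i
  -- Hermitian adjacency and Perron-type vector
  have hAH : (G.adjMatrix ℝ).IsHermitian := by
    show (G.adjMatrix ℝ)ᴴ = G.adjMatrix ℝ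
    ext i j
    simp [Matrix.conjTranspose_apply, SimpleGraph.adjMatrix_apply, SimpleGraph.adj_comm]
  obtain ⟨w, hw0, hweig⟩ := exists_eigvec hn (G.adjMatrix ℝ) hAH
  set v : Fin n → ℝ := fun i => |w i| with hv_def
  have hvnn : ∀ i, 0 ≤ v i := fun i => abs_nonneg _
  have hadj_nn : ∀ i j, 0 ≤ G.adjMatrix ℝ i j := by
    intro i j
    by_cases h : G.Adj i j <;> simp [SimpleGraph.adjMatrix_apply, h]
  have hAv : ∀ i, lam * v i ≤ ∑ j, G.adjMatrix ℝ i j * v j := by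
    intro i
    have h1 : (G.adjMatrix ℝ).mulVec w i = lam * w i := by
      rw [hweig]; simp [Pi.smul_apply, smul_eq_mul, hlam_def]
    have h2 : (G.adjMatrix ℝ).mulVec w i = ∑ j, G.adjMatrix ℝ i j * w j := by
      simp [Matrix.mulVec, dotProduct]
    calc lam * v i = |lam * w i| := by rw [abs_mul, abs_of_nonneg hlam_pos.le]
    _ = |∑ j, G.adjMatrix ℝ i j * w j| := by rw [← h2, h1]
    _ ≤ ∑ j, |G.adjMatrix ℝ i j * w j| := Finset.abs_sum_le_sum_abs _ _
    _ = ∑ j, G.adjMatrix ℝ i j * v j := by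
        apply Finset.sum_congr rfl
        intro j _
        rw [abs_mul]
        congr 1
        exact abs_of_nonneg (hadj_nn i j)
  obtain ⟨m1, hm1⟩ : ∃ m, 0 < v m := by
    obtain ⟨m, hm⟩ := Function.ne_iff.mp hw0
    exact ⟨m, abs_pos.mpr hm⟩
  set Mv : ℝ := ∑ j, v j with hMv_def
  have hMv_pos : 0 < Mv :=
    Finset.sum_pos' (fun j _ => hvnn j) ⟨m1, mem_univ m1, hm1⟩
  set u : Fin n → ℝ := fun i => v i / Mv with hu_def
  have hunn : ∀ i, 0 ≤ u i := fun i => div_nonneg (hvnn i) hMv_pos.le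
  have hun1 : ∀ i, u i ≤ 1 := by
    intro i
    rw [hu_def]
    rw [div_le_one hMv_pos]
    exact Finset.single_le_sum (fun j _ => hvnn j) (mem_univ i)
  have humpos : ∃ m, 0 < u m := ⟨m1, div_pos hm1 hMv_pos⟩
  have hAu : ∀ i, lam * u i ≤ ∑ j, G.adjMatrix ℝ i j * u j := by
    intro i
    have h1 : ∑ j, G.adjMatrix ℝ i j * u j = (∑ j, G.adjMatrix ℝ i j * v j) / Mv := by
      rw [Finset.sum_div]
      apply Finset.sum_congr rfl
      intro j _
      rw [hu_def, mul_div_assoc]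
    have h2 : lam * u i = (lam * v i) / Mv := by
      simp only [hu_def]
      ring
    rw [h1, h2, div_le_div_iff₀ hMv_pos hMv_pos]
    nlinarith [hAv i, hMv_pos]
  -- linearization at 0
  have hlin : ∀ i, HasDerivAt (fun e : ℝ => Ξ (e • u) i)
      (β * ∑ j, G.adjMatrix ℝ i j * u j) 0 := by
    intro i
    have h := segderiv Ξ hC2 0 u i 0
    have e : (0 : Fin n → ℝ) + (0:ℝ) • u = 0 := by simp
    rw [e] at h
    have e2 : fderiv ℝ (fun y => Ξ y i) 0 u = β * ∑ j, G.adjMatrix ℝ i j * u j := by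
      rw [lin_expand, Finset.mul_sum]
      apply Finset.sum_congr rfl
      intro j _
      rw [smul_eq_mul, ha1 i j]
      ring
    rw [e2] at h
    simpa using h
  have h0mem : (0:ℝ) ∈ Set.Icc (0:ℝ) 1 := ⟨le_refl 0, zero_le_one⟩
  have hωlin : ∀ i, HasDerivAt (fun e : ℝ => ω (e * u i)) (δ * u i) 0 := by
    intro i
    have hinner : HasDerivAt (fun e : ℝ => e * u i) (u i) 0 := by
      simpa using (hasDerivAt_id (0:ℝ)).mul_const (u i)
    have houter : HasDerivAt ω δ ((fun e : ℝ => e * u i) 0) := by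
      have h := (hωdiff 0 h0mem).hasDerivAt
      rw [he0] at h
      simpa using h
    have := houter.comp 0 hinner
    simpa [Function.comp_def] using this
  -- small positive subsolution
  have hei : ∀ i, ∃ e0 : ℝ, 0 < e0 ∧ ∀ e : ℝ, 0 < e → e < e0 → e < 1 →
      ω (e * u i) ≤ Ξ (e • u) i := by
    intro i
    by_cases hui : 0 < u i
    · have hphi : HasDerivAt (fun e : ℝ => Ξ (e • u) i - ω (e * u i))
          ((β * ∑ j, G.adjMatrix ℝ i j * u j) - δ * u i) 0 := (hlin i).sub (hωlin i)
      have hpos : 0 < (β * ∑ j, G.adjMatrix ℝ i j * u j) - δ * u i := by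
        have h1 : δ * u i < (β * lam) * u i := mul_lt_mul_of_pos_right hdlam hui
        have h2 : β * (lam * u i) ≤ β * ∑ j, G.adjMatrix ℝ i j * u j :=
          mul_le_mul_of_nonneg_left (hAu i) hβ0.le
        nlinarith
      have hslope := hasDerivAt_iff_tendsto_slope.mp hphi
      have hev0 : ∀ᶠ e in nhdsWithin (0:ℝ) {(0:ℝ)}ᶜ,
          0 < slope (fun e : ℝ => Ξ (e • u) i - ω (e * u i)) 0 e :=
        hslope.eventually (eventually_gt_nhds hpos)
      have hev : ∀ᶠ e in nhdsWithin (0:ℝ) (Set.Ioi 0),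
          0 < slope (fun e : ℝ => Ξ (e • u) i - ω (e * u i)) 0 e :=
        hev0.filter_mono (nhdsWithin_mono 0 (fun x hx => ne_of_gt hx))
      obtain ⟨e0, he0', hsub⟩ := mem_nhdsGT_iff_exists_Ioo_subset.mp hev
      refine ⟨e0, he0', ?_⟩
      intro e heps0 hepse0 _
      have hsl : 0 < slope (fun e : ℝ => Ξ (e • u) i - ω (e * u i)) 0 e :=
        hsub ⟨heps0, hepse0⟩
      rw [slope_def_field] at hsl
      have hsl2 : 0 < (Ξ (e • u) i - ω (e * u i) - (Ξ ((0:ℝ) • u) i - ω (0 * u i))) / (e - 0) :=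
        hsl
      have hz1 : Ξ ((0:ℝ) • u) i = 0 := by rw [zero_smul]; exact congrFun ha0 i
      rw [hz1, zero_mul, hd0, sub_zero, sub_zero, sub_zero] at hsl2
      have h3 := mul_pos hsl2 heps0
      rw [div_mul_cancel₀ _ (ne_of_gt heps0)] at h3
      linarith
    · have hui0 : u i = 0 := le_antisymm (not_lt.mp hui) (hunn i)
      refine ⟨1, one_pos, ?_⟩
      intro e heps0 _ heps1
      rw [hui0, mul_zero, hd0]
      have hmem : e • u ∈ Set.Icc (0 : Fin n → ℝ) 1 := by
        rw [hcube]
        constructor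
        · intro j
          have := hunn j
          simp only [Pi.smul_apply, smul_eq_mul]
          nlinarith
        · intro j
          have h1 := hun1 j
          have h2 := hunn j
          simp only [Pi.smul_apply, smul_eq_mul]
          nlinarith
      exact (hmap _ hmem).1 i
  choose ef hef0 hef using hei
  obtain ⟨ε, hε0, hε1, hεlt⟩ : ∃ e : ℝ, 0 < e ∧ e < 1 ∧ ∀ i, e < ef i := by
    have hinfpos : 0 < univ.inf' Finset.univ_nonempty ef :=
      (Finset.lt_inf'_iff _).mpr (fun i _ => hef0 i)
    have hmin1 : min (univ.inf' Finset.univ_nonempty ef) 1 ≤ 1 := min_le_right _ _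
    have hminI : min (univ.inf' Finset.univ_nonempty ef) 1 ≤ univ.inf' Finset.univ_nonempty ef :=
      min_le_left _ _
    have hminpos : 0 < min (univ.inf' Finset.univ_nonempty ef) 1 := lt_min hinfpos one_pos
    refine ⟨min (univ.inf' Finset.univ_nonempty ef) 1 / 2, by linarith, by linarith, ?_⟩
    intro i
    have h2 : univ.inf' Finset.univ_nonempty ef ≤ ef i := Finset.inf'_le _ (mem_univ i)
    linarith
  set xLo : Fin n → ℝ := ε • u with hxLo_def
  have hxLo_cube : xLo ∈ Set.Icc (0 : Fin n → ℝ) 1 := by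
    rw [hcube]
    constructor
    · intro j
      have := hunn j
      simp only [hxLo_def, Pi.smul_apply, smul_eq_mul]
      nlinarith
    · intro j
      have h1 := hun1 j
      have h2 := hunn j
      simp only [hxLo_def, Pi.smul_apply, smul_eq_mul]
      nlinarith
  have hLo : ∀ i, ω (xLo i) ≤ Ξ xLo i := by
    intro i
    have := hef i ε hε0 (hεlt i) hε1
    simpa [hxLo_def, Pi.smul_apply, smul_eq_mul] using this
  have hTLo : xLo ≤ T xLo := by
    intro i
    apply hωle _ ⟨hxLo_cube.1 i, hxLo_cube.2 i⟩ _ (hT xLo hxLo_cube i).1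
    rw [(hT xLo hxLo_cube i).2]
    exact hLo i
  -- monotone iteration from above
  set seq : ℕ → (Fin n → ℝ) := fun k => T^[k] 1 with hseq_def
  have hseq0 : seq 0 = 1 := rfl
  have hseq_succ : ∀ k, seq (k+1) = T (seq k) := by
    intro k; rw [hseq_def]; exact Function.iterate_succ_apply' T k 1
  have hone_mem : (1 : Fin n → ℝ) ∈ Set.Icc (0 : Fin n → ℝ) 1 := by
    rw [hcube]; exact ⟨fun i => zero_le_one, fun i => le_refl 1⟩
  have hInv : ∀ k, seq k ∈ Set.Icc (0 : Fin n → ℝ) 1 ∧ xLo ≤ seq k ∧ seq (k+1) ≤ seq k := by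
    intro k
    induction k with
    | zero =>
      refine ⟨hone_mem, fun i => hxLo_cube.2 i, ?_⟩
      rw [hseq_succ 0, hseq0]
      exact fun i => (hTmem 1 hone_mem).2 i
    | succ k ih =>
      obtain ⟨hk1, hk2, hk3⟩ := ih
      have hmem : seq (k+1) ∈ Set.Icc (0 : Fin n → ℝ) 1 := by
        rw [hseq_succ]; exact hTmem _ hk1
      refine ⟨hmem, ?_, ?_⟩
      · have h := hTmono xLo hxLo_cube (seq k) hk1 hk2
        rw [hseq_succ]
        exact le_trans hTLo h
      · rw [hseq_succ (k+1)]
        calc T (seq (k+1)) ≤ T (seq k) := hTmono _ hmem _ hk1 hk3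
        _ = seq (k+1) := (hseq_succ k).symm
  have hantimono : ∀ i, Antitone (fun k => seq k i) :=
    fun i => antitone_nat_of_succ_le (fun k => (hInv k).2.2 i)
  set xs : Fin n → ℝ := fun i => ⨅ k, seq k i with hxs_def
  have hbdd : ∀ i, BddBelow (Set.range fun k => seq k i) := by
    intro i
    refine ⟨0, ?_⟩
    rintro y ⟨k, rfl⟩
    exact (hInv k).1.1 i
  have htendi : ∀ i, Filter.Tendsto (fun k => seq k i) Filter.atTop (nhds (xs i)) :=
    fun i => tendsto_atTop_ciInf (hantimono i) (hbdd i)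
  have hxs_lo : ∀ i, xLo i ≤ xs i := fun i => le_ciInf (fun k => (hInv k).2.1 i)
  have hxs_mem : xs ∈ Set.Icc (0 : Fin n → ℝ) 1 := by
    rw [hcube]
    constructor
    · intro i
      exact le_ciInf (fun k => (hInv k).1.1 i)
    · intro i
      have h1 : seq 0 i = 1 := by simp [hseq0]
      have h : xs i ≤ seq 0 i := ciInf_le (hbdd i) 0
      linarith
  have htend : Filter.Tendsto seq Filter.atTop (nhds xs) := tendsto_pi_nhds.mpr htendi
  have hfix : ∀ i, ω (xs i) = Ξ xs i := by
    intro i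
    have hXcont : Filter.Tendsto (fun k => Ξ (seq k) i) Filter.atTop (nhds (Ξ xs i)) := by
      have hcXi : Continuous fun x => Ξ x i := (contDiff_coord Ξ hC2 i).continuous
      exact (hcXi.tendsto xs).comp htend
    have hωc : Filter.Tendsto (fun k => ω (seq (k+1) i)) Filter.atTop (nhds (ω (xs i))) := by
      have h1 : Filter.Tendsto (fun k => seq (k+1) i) Filter.atTop (nhds (xs i)) :=
        (htendi i).comp (Filter.tendsto_add_atTop_nat 1)
      have hcω : ContinuousAt ω (xs i) := (hωdiff _ ⟨hxs_mem.1 i, hxs_mem.2 i⟩).continuousAt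
      exact hcω.tendsto.comp h1
    have heqf : (fun k => ω (seq (k+1) i)) = fun k => Ξ (seq k) i := by
      funext k
      rw [hseq_succ k]
      exact (hT (seq k) (hInv k).1 i).2
    rw [heqf] at hωc
    exact tendsto_nhds_unique hωc hXcont
  obtain ⟨m0, hm0⟩ := humpos
  have hxs_ne : xs ≠ 0 := by
    intro h
    have h1 := hxs_lo m0
    rw [h] at h1
    have h2 : 0 < xLo m0 := by
      simpa [hxLo_def, Pi.smul_apply, smul_eq_mul] using mul_pos hε0 hm0
    have h3 : xLo m0 ≤ 0 := h1
    linarith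
  -- strict positivity of any nonzero solution
  have hsolpos : ∀ x, x ∈ Set.Icc (0 : Fin n → ℝ) 1 → x ≠ 0 →
      (∀ i, ω (x i) = Ξ x i) → ∀ i, 0 < x i := by
    intro x hx hx0 hfx
    have hstep : ∀ a b, G.Adj a b → 0 < x a → 0 < x b := by
      intro a b hadj ha
      rcases (hx.1 b).eq_or_lt with h0 | h0
      · exfalso
        have hE := hedge x hx b a hadj ha
        have h1 : ω (x b) = Ξ x b := hfx b
        have hb0 : x b = 0 := by rw [← h0]; simp
        have h2 : ω (x b) = 0 := by rw [hb0, hd0]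
        linarith
      · exact h0
    obtain ⟨i0, hi0⟩ := Function.ne_iff.mp hx0
    have hi0pos : 0 < x i0 := (hx.1 i0).lt_of_ne (Ne.symm hi0)
    intro i
    have hwalk : ∀ (a b : Fin n) (p : G.Walk a b), 0 < x a → 0 < x b := by
      intro a b p
      induction p with
      | nil => exact id
      | cons h q ih => exact fun ha => ih (hstep _ _ h ha)
    obtain ⟨p⟩ := hG.preconnected i0 i
    exact hwalk i0 i p hi0pos
  -- domination of solutions
  have hdom : ∀ x y, (x ∈ Set.Icc (0 : Fin n → ℝ) 1 ∧ x ≠ 0 ∧ ∀ i, ω (x i) = Ξ x i) →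
      (y ∈ Set.Icc (0 : Fin n → ℝ) 1 ∧ y ≠ 0 ∧ ∀ i, ω (y i) = Ξ y i) → y ≤ x := by
    rintro x y ⟨hx, hx0, hfx⟩ ⟨hy, hy0, hfy⟩
    have hxpos := hsolpos x hx hx0 hfx
    have hypos := hsolpos y hy hy0 hfy
    set κ : ℝ := univ.inf' Finset.univ_nonempty (fun i => x i / y i) with hκ_def
    obtain ⟨i0, _, hi0⟩ := Finset.exists_mem_eq_inf' Finset.univ_nonempty (fun i => x i / y i)
    have hκ_eq : κ = x i0 / y i0 := by rw [hκ_def, hi0]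
    have hκpos : 0 < κ := by
      rw [hκ_eq]
      exact div_pos (hxpos i0) (hypos i0)
    have hκle : ∀ i, κ * y i ≤ x i := by
      intro i
      have h1 : κ ≤ x i / y i := by
        rw [hκ_def]
        exact Finset.inf'_le _ (mem_univ i)
      rw [le_div_iff₀ (hypos i)] at h1
      exact h1
    have hκ1 : 1 ≤ κ := by
      by_contra hlt
      push_neg at hlt
      have hκy_cube : κ • y ∈ Set.Icc (0 : Fin n → ℝ) 1 := by
        rw [hcube]
        constructor
        · intro j
          have := (hypos j).le
          simp only [Pi.smul_apply, smul_eq_mul]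
          nlinarith
        · intro j
          have h1 : y j ≤ 1 := hy.2 j
          have h2 := (hypos j).le
          simp only [Pi.smul_apply, smul_eq_mul]
          nlinarith
      have h1 : Ξ (κ • y) i0 ≤ Ξ x i0 := by
        apply hmono _ _ hκy_cube hx
        intro j
        have := hκle j
        simpa [Pi.smul_apply, smul_eq_mul] using this
      have h2 : κ * Ξ y i0 ≤ Ξ (κ • y) i0 := hconc i0 y hy κ hκpos.le hlt.le
      have h3 : ω (κ * y i0) < κ * ω (y i0) := by
        have hyi0 := hypos i0
        have hff := hf (κ * y i0) (y i0) (mul_pos hκpos hyi0)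
          (by nlinarith) (hy.2 i0)
        rw [div_lt_div_iff₀ (mul_pos hκpos hyi0) hyi0] at hff
        nlinarith
      have hxi0 : x i0 = κ * y i0 := by
        rw [hκ_eq, div_mul_cancel₀ _ (ne_of_gt (hypos i0))]
      have h4 : ω (κ * y i0) = Ξ x i0 := by rw [← hxi0]; exact hfx i0
      have h5 : κ * ω (y i0) = κ * Ξ y i0 := by rw [hfy i0]
      linarith
    intro i
    nlinarith [hκle i, (hypos i).le, hκ1]
  -- conclusion
  refine ⟨xs, ⟨hxs_mem, hxs_ne, fun i => sub_eq_zero_of_eq (hfix i).symm⟩, ?_⟩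
  rintro z ⟨hz, hz0, hzfix⟩
  have hz' : ∀ i, ω (z i) = Ξ z i := fun i => (sub_eq_zero.mp (hzfix i)).symm
  exact le_antisymm (hdom xs z ⟨hxs_mem, hxs_ne, hfix⟩ ⟨hz, hz0, hz'⟩)
    (hdom z xs ⟨hz, hz0, hz'⟩ ⟨hxs_mem, hxs_ne, hfix⟩)
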